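/- arXiv:1810.10790 — 5 statements merged into one kernel-verified Lean document; each statement's English description precedes it below -/
import Mathlib

section
/- Let k be a commutative ring, λ ∈ k, and let Δ : k[x] → k[x] ⊗ k[x] be the k-linear map determined on the monomial basis by Δ(1) = −λ(1 ⊗ 1) and Δ(x^n) = Σ_{i=0}^{n−1} x^i ⊗ x^{n−1−i} + λ Σ_{i=1}^{n−1} x^i ⊗ x^{n−i} for n ≥ 1. Then Δ(pq) = p·Δ(q) + Δ(p)·q + λ(p ⊗ q) for all p, q ∈ k[x]. -/
open TensorProduct Polynomial

private lemma mulLeft_smul' {k : Type*} [CommRing k] (a : k) (p : Polynomial k) :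
    LinearMap.mulLeft k (a • p) = a • LinearMap.mulLeft k p := by
  ext x; simp [smul_mul_assoc]

private lemma mulRight_smul' {k : Type*} [CommRing k] (a : k) (p : Polynomial k) :
    LinearMap.mulRight k (a • p) = a • LinearMap.mulRight k p := by
  ext x; simp [mul_smul_comm]

private lemma mulLeft_add' {k : Type*} [CommRing k] (p q : Polynomial k) :
    LinearMap.mulLeft k (p + q) = LinearMap.mulLeft k p + LinearMap.mulLeft k q := by
  ext x; simp [add_mul]

private lemma mulRight_add' {k : Type*} [CommRing k] (p q : Polynomial k) :
    LinearMap.mulRight k (p + q) = LinearMap.mulRight k p + LinearMap.mulRight k q := by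
  ext x; simp [mul_add]

private lemma sumA {k : Type*} [CommRing k] (m n : ℕ) (hm : 1 ≤ m) (hn : 1 ≤ n) :
    (∑ i ∈ Finset.range (m+n), ((X : Polynomial k) ^ i) ⊗ₜ[k] ((X : Polynomial k) ^ (m+n - 1 - i)))
    = (∑ i ∈ Finset.range m, ((X : Polynomial k) ^ i) ⊗ₜ[k] ((X:Polynomial k) ^ (m - 1 - i) * X ^ n))
      + ∑ i ∈ Finset.range n, ((X:Polynomial k) ^ m * X ^ i) ⊗ₜ[k] ((X : Polynomial k) ^ (n - 1 - i)) := by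
  have split : Finset.range (m + n) = Finset.range m ∪ Finset.Ico m (m + n) := by
    rw [Finset.range_eq_Ico, Finset.range_eq_Ico,
      Finset.Ico_union_Ico_eq_Ico (Nat.zero_le m) (Nat.le_add_right m n)]
  rw [split, Finset.sum_union
    (by rw [Finset.range_eq_Ico]; exact Finset.Ico_disjoint_Ico_consecutive 0 m (m + n))]
  congr 1
  · refine Finset.sum_congr rfl fun i hi => ?_
    rw [Finset.mem_range] at hi
    rw [← pow_add, show m - 1 - i + n = m + n - 1 - i from by omega]
  · rw [Finset.sum_Ico_eq_sum_range, show m + n - m = n from by omega]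
    refine Finset.sum_congr rfl fun i hi => ?_
    rw [Finset.mem_range] at hi
    rw [← pow_add, show m + n - 1 - (m + i) = n - 1 - i from by omega]

private lemma sumB {k : Type*} [CommRing k] (m n : ℕ) (hm : 1 ≤ m) (hn : 1 ≤ n) :
    (∑ i ∈ Finset.Ico 1 (m+n), ((X : Polynomial k) ^ i) ⊗ₜ[k] ((X : Polynomial k) ^ (m+n - i)))
    = (∑ i ∈ Finset.Ico 1 m, ((X : Polynomial k) ^ i) ⊗ₜ[k] ((X:Polynomial k) ^ (m - i) * X ^ n))
      + (((X:Polynomial k) ^ m) ⊗ₜ[k] ((X:Polynomial k) ^ n)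
      + ∑ i ∈ Finset.Ico 1 n, ((X:Polynomial k) ^ m * X ^ i) ⊗ₜ[k] ((X : Polynomial k) ^ (n - i))) := by
  have split : Finset.Ico 1 (m + n) = Finset.Ico 1 m ∪ Finset.Ico m (m + n) := by
    rw [Finset.Ico_union_Ico_eq_Ico hm (Nat.le_add_right m n)]
  rw [split, Finset.sum_union (Finset.Ico_disjoint_Ico_consecutive 1 m (m + n)),
    Finset.sum_eq_sum_Ico_succ_bot (by omega : m < m + n)]
  congr 1
  · refine Finset.sum_congr rfl fun i hi => ?_
    rw [Finset.mem_Ico] at hi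
    rw [← pow_add, show m - i + n = m + n - i from by omega]
  · congr 1
    · rw [show m + n - m = n from by omega]
    · have l : (∑ i ∈ Finset.Ico (m+1) (m+n), ((X : Polynomial k) ^ i) ⊗ₜ[k] ((X : Polynomial k) ^ (m+n - i)))
          = ∑ i ∈ Finset.range (n-1), ((X : Polynomial k) ^ (m+1+i)) ⊗ₜ[k] ((X : Polynomial k) ^ (m+n - (m+1+i))) := by
        rw [Finset.sum_Ico_eq_sum_range, show m + n - (m+1) = n - 1 from by omega]
      have r : (∑ i ∈ Finset.Ico 1 n, ((X:Polynomial k) ^ m * X ^ i) ⊗ₜ[k] ((X : Polynomial k) ^ (n - i)))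
          = ∑ i ∈ Finset.range (n-1), ((X:Polynomial k) ^ m * X ^ (1+i)) ⊗ₜ[k] ((X : Polynomial k) ^ (n - (1+i))) := by
        rw [Finset.sum_Ico_eq_sum_range]
      rw [l, r]
      refine Finset.sum_congr rfl fun i hi => ?_
      rw [Finset.mem_range] at hi
      rw [← pow_add, show m + (1 + i) = m + 1 + i from by omega,
        show m + n - (m + 1 + i) = n - (1 + i) from by omega]

/-- The linear map `Δ` on `k[x]` determined on the monomial basis by
`Δ(1) = -λ (1 ⊗ 1)` and `Δ(x^n) = Σ_{i=0}^{n-1} x^i ⊗ x^{n-1-i} + λ Σ_{i=1}^{n-1} x^i ⊗ x^{n-i}`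
satisfies `Δ(pq) = p·Δ(q) + Δ(p)·q + λ (p ⊗ q)`. -/
theorem infinitesimal_coproduct_on_polynomials_is_weighted_derivation
    {k : Type*} [CommRing k] (lam : k)
    (Δ : Polynomial k →ₗ[k] Polynomial k ⊗[k] Polynomial k)
    (h1 : Δ 1 = -(lam • ((1 : Polynomial k) ⊗ₜ[k] (1 : Polynomial k))))
    (hX : ∀ n : ℕ, 1 ≤ n →
      Δ (X ^ n) =
        (∑ i ∈ Finset.range n,
          ((X : Polynomial k) ^ i) ⊗ₜ[k] ((X : Polynomial k) ^ (n - 1 - i))) +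
        lam • ∑ i ∈ Finset.Ico 1 n,
          ((X : Polynomial k) ^ i) ⊗ₜ[k] ((X : Polynomial k) ^ (n - i))) :
    ∀ p q : Polynomial k,
      Δ (p * q) =
        LinearMap.rTensor (Polynomial k) (LinearMap.mulLeft k p) (Δ q) +
        LinearMap.lTensor (Polynomial k) (LinearMap.mulRight k q) (Δ p) +
        lam • (p ⊗ₜ[k] q) := by
  have key : ∀ m n : ℕ,
      Δ ((X : Polynomial k) ^ m * X ^ n) =
        LinearMap.rTensor (Polynomial k) (LinearMap.mulLeft k ((X : Polynomial k) ^ m)) (Δ (X ^ n)) +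
        LinearMap.lTensor (Polynomial k) (LinearMap.mulRight k ((X : Polynomial k) ^ n)) (Δ (X ^ m)) +
        lam • (((X : Polynomial k) ^ m) ⊗ₜ[k] ((X : Polynomial k) ^ n)) := by
    intro m n
    rcases Nat.eq_zero_or_pos m with hm | hm
    · subst hm
      simp only [pow_zero, one_mul, h1, LinearMap.mulLeft_one, LinearMap.rTensor_id,
        LinearMap.id_coe, id_eq, map_neg, map_smul, LinearMap.lTensor_tmul,
        LinearMap.mulRight_apply, one_mul]
      abel
    rcases Nat.eq_zero_or_pos n with hn | hn
    · subst hn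
      simp only [pow_zero, mul_one, h1, LinearMap.mulRight_one, LinearMap.lTensor_id,
        LinearMap.id_coe, id_eq, map_neg, map_smul, LinearMap.rTensor_tmul,
        LinearMap.mulLeft_apply, mul_one]
      abel
    rw [← pow_add, hX (m + n) (by omega), hX m hm, hX n hn]
    simp only [map_add, map_smul, map_sum, LinearMap.rTensor_tmul, LinearMap.lTensor_tmul,
      LinearMap.mulLeft_apply, LinearMap.mulRight_apply]
    rw [sumA m n hm hn, sumB m n hm hn, smul_add, smul_add]
    abel
  -- reduce to monomials
  intro p q
  induction p using Polynomial.induction_on' with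
  | add f g hf hg =>
    rw [add_mul, map_add, hf, hg, mulLeft_add', LinearMap.rTensor_add, add_tmul, smul_add]
    simp only [map_add, LinearMap.add_apply]
    abel
  | monomial m a =>
    induction q using Polynomial.induction_on' with
    | add f g hf hg =>
      rw [mul_add, map_add, hf, hg, mulRight_add', LinearMap.lTensor_add, tmul_add, smul_add]
      simp only [map_add, LinearMap.add_apply]
      abel
    | monomial n b =>
      simp only [← smul_X_eq_monomial, smul_mul_smul_comm, map_smul, mulLeft_smul',
        mulRight_smul', LinearMap.rTensor_smul, LinearMap.lTensor_smul, LinearMap.smul_apply,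
        ← smul_tmul', tmul_smul, key m n, smul_add, smul_smul]
      module
end

section
/- Let k be a commutative ring, λ ∈ k, and let Δ : k[x] → k[x] ⊗ k[x] be the k-linear map determined on the monomial basis by Δ(1) = −λ(1 ⊗ 1) and Δ(x^n) = Σ_{i=0}^{n−1} x^i ⊗ x^{n−1−i} + λ Σ_{i=1}^{n−1} x^i ⊗ x^{n−i} for n ≥ 1. Then Δ is coassociative: (Δ ⊗ id) ∘ Δ = (id ⊗ Δ) ∘ Δ. Consequently (k[x], multiplication, 1, Δ) is an infinitesimal unitary bialgebra of weight λ. -/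
open TensorProduct Polynomial

set_option maxHeartbeats 1000000 in
set_option synthInstance.maxHeartbeats 400000 in
/-- The linear map `Δ` on `k[x]` determined on the monomial basis by
`Δ(1) = -λ (1 ⊗ 1)` and `Δ(x^n) = Σ_{i=0}^{n-1} x^i ⊗ x^{n-1-i} + λ Σ_{i=1}^{n-1} x^i ⊗ x^{n-i}`
is coassociative; consequently `(k[x], ·, 1, Δ)` is an infinitesimal unitary bialgebra of
weight `λ`. -/
theorem infinitesimal_coproduct_on_polynomials_coassoc
    {k : Type*} [CommRing k] (lam : k)
    (Δ : Polynomial k →ₗ[k] Polynomial k ⊗[k] Polynomial k)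
    (h1 : Δ 1 = -(lam • ((1 : Polynomial k) ⊗ₜ[k] (1 : Polynomial k))))
    (hX : ∀ n : ℕ, 1 ≤ n →
      Δ (X ^ n) =
        (∑ i ∈ Finset.range n,
          ((X : Polynomial k) ^ i) ⊗ₜ[k] ((X : Polynomial k) ^ (n - 1 - i))) +
        lam • ∑ i ∈ Finset.Ico 1 n,
          ((X : Polynomial k) ^ i) ⊗ₜ[k] ((X : Polynomial k) ^ (n - i))) :
    (∀ p : Polynomial k,
      (TensorProduct.assoc k (Polynomial k) (Polynomial k) (Polynomial k))
          (LinearMap.rTensor (Polynomial k) Δ (Δ p)) =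
        LinearMap.lTensor (Polynomial k) Δ (Δ p)) ∧
    (∀ p q : Polynomial k,
      Δ (p * q) =
        LinearMap.rTensor (Polynomial k) (LinearMap.mulLeft k p) (Δ q) +
        LinearMap.lTensor (Polynomial k) (LinearMap.mulRight k q) (Δ p) +
        lam • (p ⊗ₜ[k] q)) := by
  have hX1 : Δ X = (1 : Polynomial k) ⊗ₜ[k] (1 : Polynomial k) := by
    have h := hX 1 le_rfl
    simpa using h
  have key : ∀ m n : ℕ, Δ (X ^ m * X ^ n) =
      LinearMap.rTensor (Polynomial k) (LinearMap.mulLeft k ((X : Polynomial k) ^ m))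
        (Δ (X ^ n)) +
      LinearMap.lTensor (Polynomial k) (LinearMap.mulRight k ((X : Polynomial k) ^ n))
        (Δ (X ^ m)) +
      lam • (((X : Polynomial k) ^ m) ⊗ₜ[k] ((X : Polynomial k) ^ n)) := by
    intro m n
    rcases Nat.eq_zero_or_pos m with hm | hm
    · subst hm
      simp only [pow_zero, one_mul, h1, LinearMap.mulLeft_one, LinearMap.rTensor_id,
        LinearMap.id_apply, map_neg, map_smul, LinearMap.lTensor_tmul,
        LinearMap.mulRight_apply, one_mul]
      abel
    rcases Nat.eq_zero_or_pos n with hn | hn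
    · subst hn
      simp only [pow_zero, mul_one, h1, LinearMap.mulRight_one, LinearMap.lTensor_id,
        LinearMap.id_apply, map_neg, map_smul, LinearMap.rTensor_tmul,
        LinearMap.mulLeft_apply, mul_one]
      abel
    -- main case
    rw [← pow_add, hX (m + n) (by omega), hX m hm, hX n hn]
    simp only [map_add, map_smul, map_sum, LinearMap.rTensor_tmul, LinearMap.lTensor_tmul,
      LinearMap.mulLeft_apply, LinearMap.mulRight_apply]
    have e1 : (∑ i ∈ Finset.range (m + n),
          ((X : Polynomial k) ^ i) ⊗ₜ[k] ((X : Polynomial k) ^ (m + n - 1 - i)))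
        = (∑ i ∈ Finset.range m,
            ((X : Polynomial k) ^ i) ⊗ₜ[k] ((X : Polynomial k) ^ (m - 1 - i) * X ^ n))
          + ∑ i ∈ Finset.range n,
            ((X : Polynomial k) ^ m * X ^ i) ⊗ₜ[k] ((X : Polynomial k) ^ (n - 1 - i)) := by
      rw [Finset.sum_range_add]
      congr 1
      · refine Finset.sum_congr rfl fun i hi => ?_
        rw [Finset.mem_range] at hi
        rw [← pow_add]
        congr 2
        omega
      · refine Finset.sum_congr rfl fun i hi => ?_
        rw [Finset.mem_range] at hi
        rw [← pow_add]
        congr 2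
        omega
    have e2 : (∑ i ∈ Finset.Ico 1 (m + n),
          ((X : Polynomial k) ^ i) ⊗ₜ[k] ((X : Polynomial k) ^ (m + n - i)))
        = (∑ i ∈ Finset.Ico 1 n,
            ((X : Polynomial k) ^ m * X ^ i) ⊗ₜ[k] ((X : Polynomial k) ^ (n - i)))
          + ((∑ i ∈ Finset.Ico 1 m,
            ((X : Polynomial k) ^ i) ⊗ₜ[k] ((X : Polynomial k) ^ (m - i) * X ^ n))
          + ((X : Polynomial k) ^ m) ⊗ₜ[k] ((X : Polynomial k) ^ n)) := by
      rw [← Finset.sum_Ico_consecutive _ (by omega : 1 ≤ m) (by omega : m ≤ m + n),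
        Finset.sum_eq_sum_Ico_succ_bot (by omega : m < m + n)]
      have h3 : (∑ i ∈ Finset.Ico (m+1) (m + n),
            ((X : Polynomial k) ^ i) ⊗ₜ[k] ((X : Polynomial k) ^ (m + n - i)))
          = ∑ i ∈ Finset.Ico 1 n,
            ((X : Polynomial k) ^ m * X ^ i) ⊗ₜ[k] ((X : Polynomial k) ^ (n - i)) := by
        rw [Finset.sum_Ico_eq_sum_range, Finset.sum_Ico_eq_sum_range]
        refine Finset.sum_congr (by congr 1; omega) fun i hi => ?_
        rw [Finset.mem_range] at hi
        rw [← pow_add]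
        congr 2
        · omega
        · omega
      have h4 : (∑ i ∈ Finset.Ico 1 m,
            ((X : Polynomial k) ^ i) ⊗ₜ[k] ((X : Polynomial k) ^ (m + n - i)))
          = ∑ i ∈ Finset.Ico 1 m,
            ((X : Polynomial k) ^ i) ⊗ₜ[k] ((X : Polynomial k) ^ (m - i) * X ^ n) := by
        refine Finset.sum_congr rfl fun i hi => ?_
        rw [Finset.mem_Ico] at hi
        rw [← pow_add]
        congr 2
        omega
      have h5 : m + n - m = n := by omega
      rw [h3, h4, h5]
      abel
    rw [e1, e2]
    rw [smul_add, smul_add]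
    abel
  have part2 : ∀ p q : Polynomial k,
      Δ (p * q) =
        LinearMap.rTensor (Polynomial k) (LinearMap.mulLeft k p) (Δ q) +
        LinearMap.lTensor (Polynomial k) (LinearMap.mulRight k q) (Δ p) +
        lam • (p ⊗ₜ[k] q) := by
    have hmlAdd : ∀ p q : Polynomial k, LinearMap.mulLeft k (p + q)
        = LinearMap.mulLeft k p + LinearMap.mulLeft k q := by
      intro p q; ext b; simp [add_mul]
    have hmlSmul : ∀ (a : k) (p : Polynomial k), LinearMap.mulLeft k (a • p)
        = a • LinearMap.mulLeft k p := by
      intro a p; ext b; simp [smul_mul_assoc]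
    have hmrAdd : ∀ p q : Polynomial k, LinearMap.mulRight k (p + q)
        = LinearMap.mulRight k p + LinearMap.mulRight k q := by
      intro p q; ext b; simp [mul_add]
    have hmrSmul : ∀ (a : k) (p : Polynomial k), LinearMap.mulRight k (a • p)
        = a • LinearMap.mulRight k p := by
      intro a p; ext b; simp [mul_smul_comm]
    have key2 : ∀ (p : Polynomial k) (n : ℕ),
        Δ (p * X ^ n) =
          LinearMap.rTensor (Polynomial k) (LinearMap.mulLeft k p) (Δ (X ^ n)) +
          LinearMap.lTensor (Polynomial k) (LinearMap.mulRight k ((X:Polynomial k) ^ n)) (Δ p) +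
          lam • (p ⊗ₜ[k] ((X:Polynomial k) ^ n)) := by
      intro p n
      induction p using Polynomial.induction_on' with
      | add f g hf hg =>
        simp only [add_mul, map_add, hf, hg, hmlAdd, LinearMap.rTensor_add, add_tmul, smul_add,
          LinearMap.add_apply]
        abel
      | monomial m a =>
        rw [← smul_X_eq_monomial, smul_mul_assoc, map_smul, key m n]
        simp only [hmlSmul, LinearMap.rTensor_smul, LinearMap.smul_apply, map_smul, smul_tmul',
          smul_add, smul_comm lam a]
    intro p q
    induction q using Polynomial.induction_on' with
    | add f g hf hg =>
      simp only [mul_add, map_add, hf, hg, hmrAdd, LinearMap.lTensor_add, tmul_add, smul_add,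
        LinearMap.add_apply]
      abel
    | monomial m a =>
      rw [← smul_X_eq_monomial, mul_smul_comm, map_smul, key2 p m]
      simp only [hmrSmul, LinearMap.lTensor_smul, LinearMap.smul_apply, map_smul, tmul_smul,
        smul_add, smul_comm lam a]
  refine ⟨?_, part2⟩
  have h1' : Δ 1 = (-lam) • ((1 : Polynomial k) ⊗ₜ[k] (1 : Polynomial k)) := by
    rw [h1]; exact (neg_smul lam ((1 : Polynomial k) ⊗ₜ[k] (1 : Polynomial k))).symm
  have hDmulX : ∀ b : Polynomial k, Δ (X * b) =
      LinearMap.rTensor (Polynomial k) (LinearMap.mulLeft k (X : Polynomial k)) (Δ b)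
        + ((1 : Polynomial k) ⊗ₜ[k] b + lam • ((X : Polynomial k) ⊗ₜ[k] b)) := by
    intro b
    rw [part2 X b, hX1]
    simp only [LinearMap.lTensor_tmul, LinearMap.mulRight_apply, one_mul]
    abel
  have subassoc : ∀ (f : Polynomial k →ₗ[k] Polynomial k)
      (u : Polynomial k ⊗[k] Polynomial k) (c : Polynomial k),
      (TensorProduct.assoc k (Polynomial k) (Polynomial k) (Polynomial k))
          ((LinearMap.rTensor (Polynomial k) f u) ⊗ₜ[k] c)
        = LinearMap.rTensor (Polynomial k ⊗[k] Polynomial k) f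
            ((TensorProduct.assoc k (Polynomial k) (Polynomial k) (Polynomial k)) (u ⊗ₜ[k] c)) := by
    intro f u c
    induction u with
    | zero => simp only [map_zero, zero_tmul]
    | add x y hx hy => simp only [map_add, add_tmul, hx, hy]
    | tmul a b =>
      simp only [LinearMap.rTensor_tmul, assoc_tmul]
  have hL : ∀ t : Polynomial k ⊗[k] Polynomial k,
      (TensorProduct.assoc k (Polynomial k) (Polynomial k) (Polynomial k))
          (LinearMap.rTensor (Polynomial k) Δ
            (LinearMap.rTensor (Polynomial k) (LinearMap.mulLeft k (X : Polynomial k)) t))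
        = LinearMap.rTensor (Polynomial k ⊗[k] Polynomial k)
              (LinearMap.mulLeft k (X : Polynomial k))
            ((TensorProduct.assoc k (Polynomial k) (Polynomial k) (Polynomial k))
              (LinearMap.rTensor (Polynomial k) Δ t))
          + ((1 : Polynomial k) ⊗ₜ[k] t + lam • ((X : Polynomial k) ⊗ₜ[k] t)) := by
    intro t
    induction t with
    | zero => simp only [map_zero, tmul_zero, smul_zero, add_zero]
    | add x y hx hy =>
      simp only [map_add, hx, hy, tmul_add, smul_add]
      abel
    | tmul b c =>
      simp only [LinearMap.rTensor_tmul, LinearMap.mulLeft_apply]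
      rw [hDmulX b]
      simp only [map_add, map_smul, add_tmul, smul_tmul', assoc_tmul, subassoc]
      try abel
  have hR : ∀ t : Polynomial k ⊗[k] Polynomial k,
      LinearMap.lTensor (Polynomial k) Δ
          (LinearMap.rTensor (Polynomial k) (LinearMap.mulLeft k (X : Polynomial k)) t)
        = LinearMap.rTensor (Polynomial k ⊗[k] Polynomial k)
            (LinearMap.mulLeft k (X : Polynomial k))
            (LinearMap.lTensor (Polynomial k) Δ t) := by
    intro t
    induction t with
    | zero => simp only [map_zero]
    | add x y hx hy => simp only [map_add, hx, hy]
    | tmul b c =>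
      simp only [LinearMap.rTensor_tmul, LinearMap.lTensor_tmul, LinearMap.mulLeft_apply]
  have hpow : ∀ n : ℕ,
      (TensorProduct.assoc k (Polynomial k) (Polynomial k) (Polynomial k))
          (LinearMap.rTensor (Polynomial k) Δ (Δ ((X : Polynomial k) ^ n)))
        = LinearMap.lTensor (Polynomial k) Δ (Δ ((X : Polynomial k) ^ n)) := by
    intro n
    induction n with
    | zero =>
      rw [pow_zero, h1']
      simp only [map_smul, LinearMap.rTensor_tmul, LinearMap.lTensor_tmul, h1',
        ← smul_tmul', tmul_smul, smul_smul, assoc_tmul]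
    | succ n ih =>
      have hs : Δ ((X : Polynomial k) ^ (n + 1)) =
          LinearMap.rTensor (Polynomial k) (LinearMap.mulLeft k (X : Polynomial k))
            (Δ ((X : Polynomial k) ^ n))
            + ((1 : Polynomial k) ⊗ₜ[k] ((X : Polynomial k) ^ n)
              + lam • ((X : Polynomial k) ⊗ₜ[k] ((X : Polynomial k) ^ n))) := by
        rw [pow_succ']; exact hDmulX _
      rw [hs]
      simp only [map_add, map_smul, LinearMap.rTensor_tmul, LinearMap.lTensor_tmul,
        hX1, h1', assoc_tmul, hL, hR, ih]
      simp only [← smul_tmul', tmul_smul, smul_smul, map_smul, assoc_tmul]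
      module
  intro p
  induction p using Polynomial.induction_on' with
  | add f g hf hg => simp only [map_add, hf, hg]
  | monomial m a =>
    rw [← smul_X_eq_monomial]
    simp only [map_smul, hpow m]
end

section
/- Let (A, m_A, 1_A, Δ_A) and (B, m_B, 1_B, Δ_B) be infinitesimal unitary bialgebras of weight λ, and define the k-linear map Δ : (A ⊗ B) → (A ⊗ B) ⊗ (A ⊗ B) by Δ(a ⊗ b) = Σ_{(a)} (a_(1) ⊗ 1_B) ⊗ (a_(2) ⊗ b) + Σ_{(b)} (a ⊗ b_(1)) ⊗ (1_A ⊗ b_(2)) + λ (a ⊗ 1_B) ⊗ (1_A ⊗ b), using the Sweedler notation Δ_A(a) = Σ_{(a)} a_(1) ⊗ a_(2) and Δ_B(b) = Σ_{(b)} b_(1) ⊗ b_(2). Then Δ is coassociative: (Δ ⊗ id) ∘ Δ = (id ⊗ Δ) ∘ Δ, so (A ⊗ B, Δ) is a (not necessarily counital) coalgebra. -/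
open TensorProduct LinearMap

section helpers
variable {k : Type*} [CommRing k]
variable {M N P M' N' P' : Type*}
  [AddCommGroup M] [AddCommGroup N] [AddCommGroup P]
  [AddCommGroup M'] [AddCommGroup N'] [AddCommGroup P']
  [Module k M] [Module k N] [Module k P] [Module k M'] [Module k N'] [Module k P']

lemma icoassoc_rT_map (h : M' →ₗ[k] P) (f : M →ₗ[k] M') (g : N →ₗ[k] N') (x : M ⊗[k] N) :
    LinearMap.rTensor N' h (TensorProduct.map f g x) = TensorProduct.map (h ∘ₗ f) g x := by
  induction x using TensorProduct.induction_on with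
  | zero => simp
  | tmul => simp
  | add u v hu hv => simp [map_add, hu, hv]

lemma icoassoc_lT_map (h : N' →ₗ[k] P) (f : M →ₗ[k] M') (g : N →ₗ[k] N') (x : M ⊗[k] N) :
    LinearMap.lTensor M' h (TensorProduct.map f g x) = TensorProduct.map f (h ∘ₗ g) x := by
  induction x using TensorProduct.induction_on with
  | zero => simp
  | tmul => simp
  | add u v hu hv => simp [map_add, hu, hv]

lemma icoassoc_map_comp_left (h : M' →ₗ[k] P) (f : M →ₗ[k] M') (g : N →ₗ[k] N') (x : M ⊗[k] N) :
    TensorProduct.map (h ∘ₗ f) g x = TensorProduct.map h g (LinearMap.rTensor N f x) := by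
  induction x using TensorProduct.induction_on with
  | zero => simp
  | tmul => simp
  | add u v hu hv => simp only [map_add, hu, hv]

lemma icoassoc_map_comp_right (h : N' →ₗ[k] P) (f : M →ₗ[k] M') (g : N →ₗ[k] N') (x : M ⊗[k] N) :
    TensorProduct.map f (h ∘ₗ g) x = TensorProduct.map f h (LinearMap.lTensor M g x) := by
  induction x using TensorProduct.induction_on with
  | zero => simp
  | tmul => simp
  | add u v hu hv => simp only [map_add, hu, hv]

lemma icoassoc_assoc_nat (f : M →ₗ[k] M') (g : N →ₗ[k] N') (h : P →ₗ[k] P')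
    (w : (M ⊗[k] N) ⊗[k] P) :
    (TensorProduct.assoc k M' N' P')
        (TensorProduct.map (TensorProduct.map f g) h w) =
      TensorProduct.map f (TensorProduct.map g h) ((TensorProduct.assoc k M N P) w) := by
  induction w using TensorProduct.induction_on with
  | zero => simp
  | tmul u c =>
    induction u using TensorProduct.induction_on with
    | zero => simp
    | tmul => simp
    | add u v hu hv => simp only [add_tmul, map_add, hu, hv]
  | add u v hu hv => simp [map_add, hu, hv]

end helpers


set_option synthInstance.maxHeartbeats 1000000
set_option maxHeartbeats 1000000

section GK
variable {k A B : Type*} [CommRing k] [Ring A] [Algebra k A] [Ring B] [Algebra k B]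

/-- `b' ↦ Σ (a₁ ⊗ 1) ⊗ (a₂ ⊗ b')` for `x = Σ a₁ ⊗ a₂`. -/
noncomputable def icoassocG (x : A ⊗[k] A) : B →ₗ[k] (A ⊗[k] B) ⊗[k] (A ⊗[k] B) where
  toFun b' := TensorProduct.map ((TensorProduct.mk k A B).flip 1)
      ((TensorProduct.mk k A B).flip b') x
  map_add' b₁ b₂ := by
    have h : ((TensorProduct.mk k A B).flip) (b₁ + b₂)
        = (TensorProduct.mk k A B).flip b₁ + (TensorProduct.mk k A B).flip b₂ :=
      map_add _ _ _
    simp only [h, TensorProduct.map_add_right, LinearMap.add_apply]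
  map_smul' c b' := by
    have h : ((TensorProduct.mk k A B).flip) (c • b')
        = c • (TensorProduct.mk k A B).flip b' := map_smul _ _ _
    simp only [h, TensorProduct.map_smul_right, LinearMap.smul_apply, RingHom.id_apply]

@[simp] lemma icoassocG_apply (x : A ⊗[k] A) (b' : B) :
    icoassocG x b' = TensorProduct.map ((TensorProduct.mk k A B).flip 1)
      ((TensorProduct.mk k A B).flip b') x := rfl

/-- `a' ↦ Σ (a' ⊗ b₁) ⊗ (1 ⊗ b₂)` for `y = Σ b₁ ⊗ b₂`. -/
noncomputable def icoassocK (y : B ⊗[k] B) : A →ₗ[k] (A ⊗[k] B) ⊗[k] (A ⊗[k] B) where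
  toFun a' := TensorProduct.map (TensorProduct.mk k A B a')
      (TensorProduct.mk k A B 1) y
  map_add' a₁ a₂ := by
    have h : (TensorProduct.mk k A B) (a₁ + a₂)
        = TensorProduct.mk k A B a₁ + TensorProduct.mk k A B a₂ := map_add _ _ _
    simp only [h, TensorProduct.map_add_left, LinearMap.add_apply]
  map_smul' c a' := by
    have h : (TensorProduct.mk k A B) (c • a')
        = c • TensorProduct.mk k A B a' := map_smul _ _ _
    simp only [h, TensorProduct.map_smul_left, LinearMap.smul_apply, RingHom.id_apply]

@[simp] lemma icoassocK_apply (y : B ⊗[k] B) (a' : A) :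
    icoassocK y a' = TensorProduct.map (TensorProduct.mk k A B a')
      (TensorProduct.mk k A B 1) y := rfl

@[simp] lemma icoassocG_add (x x' : A ⊗[k] A) :
    (icoassocG (x + x') : B →ₗ[k] _) = icoassocG x + icoassocG x' := by
  ext b'; simp [map_add]

@[simp] lemma icoassocG_zero :
    (icoassocG (0 : A ⊗[k] A) : B →ₗ[k] _) = 0 := by
  ext b'; simp

@[simp] lemma icoassocK_add (y y' : B ⊗[k] B) :
    (icoassocK (y + y') : A →ₗ[k] _) = icoassocK y + icoassocK y' := by
  ext a'; simp [map_add]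

@[simp] lemma icoassocK_zero :
    (icoassocK (0 : B ⊗[k] B) : A →ₗ[k] _) = 0 := by
  ext a'; simp

lemma icoassocC1 (x : A ⊗[k] A) (y : B ⊗[k] B) :
    (TensorProduct.assoc k (A ⊗[k] B) (A ⊗[k] B) (A ⊗[k] B))
        (TensorProduct.map (icoassocG x) (TensorProduct.mk k A B 1) y) =
      TensorProduct.map ((TensorProduct.mk k A B).flip 1) (icoassocK y) x := by
  induction x using TensorProduct.induction_on with
  | zero => simp
  | add u v hu hv => simp only [icoassocG_add, TensorProduct.map_add_left, LinearMap.add_apply,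
      map_add, hu, hv]
  | tmul a₁ a₂ =>
    induction y using TensorProduct.induction_on with
    | zero => simp
    | tmul b₁ b₂ => simp
    | add u v hu hv =>
      simp only [map_add, hu, hv, icoassocK_add, TensorProduct.map_add_right, LinearMap.add_apply]

lemma icoassocC2 (a : A) (y : B ⊗[k] B) :
    (TensorProduct.assoc k (A ⊗[k] B) (A ⊗[k] B) (A ⊗[k] B))
        (TensorProduct.map
          ((TensorProduct.mk k (A ⊗[k] B) (A ⊗[k] B) (a ⊗ₜ[k] (1 : B))) ∘ₗ
            TensorProduct.mk k A B 1)
          (TensorProduct.mk k A B 1) y) =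
      (a ⊗ₜ[k] (1 : B)) ⊗ₜ[k]
        (TensorProduct.map (TensorProduct.mk k A B 1) (TensorProduct.mk k A B 1) y) := by
  induction y using TensorProduct.induction_on with
  | zero => simp
  | tmul b₁ b₂ => simp
  | add u v hu hv => simp [map_add, hu, hv, tmul_add]

lemma icoassocC3 (b : B) (x : A ⊗[k] A) :
    (TensorProduct.assoc k (A ⊗[k] B) (A ⊗[k] B) (A ⊗[k] B))
        ((TensorProduct.map ((TensorProduct.mk k A B).flip 1)
          ((TensorProduct.mk k A B).flip 1) x) ⊗ₜ[k] ((1 : A) ⊗ₜ[k] b)) =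
      TensorProduct.map ((TensorProduct.mk k A B).flip 1)
        (((TensorProduct.mk k (A ⊗[k] B) (A ⊗[k] B)).flip ((1 : A) ⊗ₜ[k] b)) ∘ₗ
          ((TensorProduct.mk k A B).flip 1)) x := by
  induction x using TensorProduct.induction_on with
  | zero => simp
  | tmul a₁ a₂ => simp
  | add u v hu hv => simp [map_add, add_tmul, hu, hv]

end GK

/-- For infinitesimal unitary bialgebras `A`, `B` of weight `λ`, the coproduct `Δ` on `A ⊗ B`
given by `Δ(a ⊗ b) = Σ (a₁ ⊗ 1) ⊗ (a₂ ⊗ b) + Σ (a ⊗ b₁) ⊗ (1 ⊗ b₂) + λ (a ⊗ 1) ⊗ (1 ⊗ b)`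
is coassociative. -/
theorem tensor_coproduct_coassoc
    {k A B : Type*} [CommRing k] [Ring A] [Algebra k A] [Ring B] [Algebra k B] (lam : k)
    (ΔA : A →ₗ[k] A ⊗[k] A) (ΔB : B →ₗ[k] B ⊗[k] B)
    (hAcoassoc : ∀ a : A,
      (TensorProduct.assoc k A A A) (LinearMap.rTensor A ΔA (ΔA a)) =
        LinearMap.lTensor A ΔA (ΔA a))
    (hAcompat : ∀ a a' : A,
      ΔA (a * a') =
        LinearMap.rTensor A (LinearMap.mulLeft k a) (ΔA a') +
        LinearMap.lTensor A (LinearMap.mulRight k a') (ΔA a) +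
        lam • (a ⊗ₜ[k] a'))
    (hBcoassoc : ∀ b : B,
      (TensorProduct.assoc k B B B) (LinearMap.rTensor B ΔB (ΔB b)) =
        LinearMap.lTensor B ΔB (ΔB b))
    (hBcompat : ∀ b b' : B,
      ΔB (b * b') =
        LinearMap.rTensor B (LinearMap.mulLeft k b) (ΔB b') +
        LinearMap.lTensor B (LinearMap.mulRight k b') (ΔB b) +
        lam • (b ⊗ₜ[k] b'))
    (Δ : A ⊗[k] B →ₗ[k] (A ⊗[k] B) ⊗[k] (A ⊗[k] B))
    (hΔ : ∀ (a : A) (b : B),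
      Δ (a ⊗ₜ[k] b) =
        TensorProduct.map ((TensorProduct.mk k A B).flip 1)
          ((TensorProduct.mk k A B).flip b) (ΔA a) +
        TensorProduct.map (TensorProduct.mk k A B a) (TensorProduct.mk k A B 1) (ΔB b) +
        lam • ((a ⊗ₜ[k] (1 : B)) ⊗ₜ[k] ((1 : A) ⊗ₜ[k] b))) :
    ∀ z : A ⊗[k] B,
      (TensorProduct.assoc k (A ⊗[k] B) (A ⊗[k] B) (A ⊗[k] B))
          (LinearMap.rTensor (A ⊗[k] B) Δ (Δ z)) =
        LinearMap.lTensor (A ⊗[k] B) Δ (Δ z) := by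
  have hA1 : ΔA 1 = -(lam • ((1 : A) ⊗ₜ[k] (1 : A))) := by
    have h := hAcompat 1 1
    simp only [mul_one, LinearMap.mulLeft_one, LinearMap.mulRight_one, LinearMap.rTensor_id,
      LinearMap.lTensor_id, LinearMap.id_coe, id_eq] at h
    refine eq_neg_of_add_eq_zero_left (add_left_cancel (a := ΔA 1) ?_)
    rw [add_zero, ← add_assoc]
    exact h.symm
  have hB1 : ΔB 1 = -(lam • ((1 : B) ⊗ₜ[k] (1 : B))) := by
    have h := hBcompat 1 1
    simp only [mul_one, LinearMap.mulLeft_one, LinearMap.mulRight_one, LinearMap.rTensor_id,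
      LinearMap.lTensor_id, LinearMap.id_coe, id_eq] at h
    refine eq_neg_of_add_eq_zero_left (add_left_cancel (a := ΔB 1) ?_)
    rw [add_zero, ← add_assoc]
    exact h.symm
  have hΔa1 : ∀ a' : A,
      Δ (a' ⊗ₜ[k] (1 : B)) =
        TensorProduct.map ((TensorProduct.mk k A B).flip 1)
          ((TensorProduct.mk k A B).flip 1) (ΔA a') := by
    intro a'
    rw [hΔ a' 1, hB1]
    simp only [map_neg, map_smul, TensorProduct.map_tmul, TensorProduct.mk_apply]
    abel
  have hΔ1b : ∀ b' : B,
      Δ ((1 : A) ⊗ₜ[k] b') =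
        TensorProduct.map (TensorProduct.mk k A B 1)
          (TensorProduct.mk k A B 1) (ΔB b') := by
    intro b'
    rw [hΔ 1 b', hA1]
    simp only [map_neg, map_smul, TensorProduct.map_tmul, TensorProduct.mk_apply,
      LinearMap.flip_apply]
    abel
  have e1 : Δ ∘ₗ ((TensorProduct.mk k A B).flip 1) =
      (TensorProduct.map ((TensorProduct.mk k A B).flip 1)
        ((TensorProduct.mk k A B).flip 1)) ∘ₗ ΔA := by
    ext a'
    simp only [LinearMap.coe_comp, Function.comp_apply, LinearMap.flip_apply,
      TensorProduct.mk_apply, hΔa1]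
  have e2 : Δ ∘ₗ (TensorProduct.mk k A B 1) =
      (TensorProduct.map (TensorProduct.mk k A B 1)
        (TensorProduct.mk k A B 1)) ∘ₗ ΔB := by
    ext b'
    simp only [LinearMap.coe_comp, Function.comp_apply, TensorProduct.mk_apply, hΔ1b]
  intro z
  induction z using TensorProduct.induction_on with
  | zero => simp
  | add u v hu hv => simp only [map_add, hu, hv]
  | tmul a b =>
    have e3 : Δ ∘ₗ ((TensorProduct.mk k A B).flip b) =
        (TensorProduct.map ((TensorProduct.mk k A B).flip 1)
          ((TensorProduct.mk k A B).flip b)) ∘ₗ ΔA +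
        icoassocK (ΔB b) +
        lam • (((TensorProduct.mk k (A ⊗[k] B) (A ⊗[k] B)).flip ((1 : A) ⊗ₜ[k] b)) ∘ₗ
          ((TensorProduct.mk k A B).flip 1)) := by
      ext a'
      simp only [LinearMap.add_apply, LinearMap.smul_apply, LinearMap.coe_comp,
        Function.comp_apply, LinearMap.flip_apply, TensorProduct.mk_apply,
        icoassocK_apply, hΔ]
    have e4 : Δ ∘ₗ (TensorProduct.mk k A B a) =
        icoassocG (ΔA a) +
        (TensorProduct.map (TensorProduct.mk k A B a) (TensorProduct.mk k A B 1)) ∘ₗ ΔB +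
        lam • ((TensorProduct.mk k (A ⊗[k] B) (A ⊗[k] B) (a ⊗ₜ[k] (1 : B))) ∘ₗ
          (TensorProduct.mk k A B 1)) := by
      ext b'
      simp only [LinearMap.add_apply, LinearMap.smul_apply, LinearMap.coe_comp,
        Function.comp_apply, LinearMap.flip_apply, TensorProduct.mk_apply,
        icoassocG_apply, hΔ]
    rw [hΔ a b]
    simp only [map_add, map_smul]
    rw [icoassoc_rT_map, icoassoc_rT_map, icoassoc_lT_map, icoassoc_lT_map,
      LinearMap.rTensor_tmul, LinearMap.lTensor_tmul, hΔa1 a, hΔ1b b,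
      e1, e2, e3, e4]
    rw [TensorProduct.map_add_left, TensorProduct.map_add_left,
      TensorProduct.map_smul_left, TensorProduct.map_add_right,
      TensorProduct.map_add_right, TensorProduct.map_smul_right]
    simp only [LinearMap.add_apply, LinearMap.smul_apply, map_add, map_smul]
    rw [icoassoc_map_comp_left, icoassoc_map_comp_left,
      icoassoc_map_comp_right, icoassoc_map_comp_right,
      icoassoc_map_comp_right
        (TensorProduct.map (TensorProduct.mk k A B 1) (TensorProduct.mk k A B 1))
        (TensorProduct.mk k A B a) ΔB (ΔB b)]
    rw [icoassoc_assoc_nat, icoassoc_assoc_nat, hAcoassoc a, hBcoassoc b]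
    rw [icoassocC1 (ΔA a) (ΔB b), icoassocC2 a (ΔB b), icoassocC3 b (ΔA a),
      icoassoc_map_comp_right
        ((TensorProduct.mk k (A ⊗[k] B) (A ⊗[k] B)).flip ((1 : A) ⊗ₜ[k] b))
        ((TensorProduct.mk k A B).flip 1) ((TensorProduct.mk k A B).flip 1) (ΔA a)]
    abel
end

section
/- Let (A, m, 1, Δ_A) be an infinitesimal unitary bialgebra of weight λ, and equip A ⊗ A with the coproduct Δ defined by Δ(a ⊗ b) = Σ_{(a)} (a_(1) ⊗ 1) ⊗ (a_(2) ⊗ b) + Σ_{(b)} (a ⊗ b_(1)) ⊗ (1 ⊗ b_(2)) + λ (a ⊗ 1) ⊗ (1 ⊗ b), where Δ_A(a) = Σ_{(a)} a_(1) ⊗ a_(2). Then the multiplication map m : A ⊗ A → A is a morphism of coalgebras, i.e. Δ_A ∘ m = (m ⊗ m) ∘ Δ. -/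
open TensorProduct

/-- For an infinitesimal unitary bialgebra `A` of weight `λ`, with the coproduct `Δ` on `A ⊗ A`
given by `Δ(a ⊗ b) = Σ (a₁ ⊗ 1) ⊗ (a₂ ⊗ b) + Σ (a ⊗ b₁) ⊗ (1 ⊗ b₂) + λ (a ⊗ 1) ⊗ (1 ⊗ b)`,
the multiplication `m : A ⊗ A → A` is a morphism of coalgebras: `Δ_A ∘ m = (m ⊗ m) ∘ Δ`. -/
theorem multiplication_is_coalgebra_morphism
    {k A : Type*} [CommRing k] [Ring A] [Algebra k A] (lam : k)
    (ΔA : A →ₗ[k] A ⊗[k] A)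
    (hAcoassoc : ∀ a : A,
      (TensorProduct.assoc k A A A) (LinearMap.rTensor A ΔA (ΔA a)) =
        LinearMap.lTensor A ΔA (ΔA a))
    (hAcompat : ∀ a a' : A,
      ΔA (a * a') =
        LinearMap.rTensor A (LinearMap.mulLeft k a) (ΔA a') +
        LinearMap.lTensor A (LinearMap.mulRight k a') (ΔA a) +
        lam • (a ⊗ₜ[k] a'))
    (Δ : A ⊗[k] A →ₗ[k] (A ⊗[k] A) ⊗[k] (A ⊗[k] A))
    (hΔ : ∀ (a b : A),
      Δ (a ⊗ₜ[k] b) =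
        TensorProduct.map ((TensorProduct.mk k A A).flip 1)
          ((TensorProduct.mk k A A).flip b) (ΔA a) +
        TensorProduct.map (TensorProduct.mk k A A a) (TensorProduct.mk k A A 1) (ΔA b) +
        lam • ((a ⊗ₜ[k] (1 : A)) ⊗ₜ[k] ((1 : A) ⊗ₜ[k] b))) :
    ∀ z : A ⊗[k] A,
      ΔA (LinearMap.mul' k A z) =
        TensorProduct.map (LinearMap.mul' k A) (LinearMap.mul' k A) (Δ z) := by
  intro z
  induction z using TensorProduct.induction_on with
  | zero => simp
  | add x y hx hy => simp [map_add, hx, hy]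
  | tmul a b =>
    rw [hΔ a b]
    simp only [LinearMap.mul'_apply, map_add, map_smul, TensorProduct.map_tmul,
      one_mul, mul_one]
    rw [hAcompat a b]
    have h1 : TensorProduct.map (LinearMap.mul' k A) (LinearMap.mul' k A)
        (TensorProduct.map ((TensorProduct.mk k A A).flip 1)
          ((TensorProduct.mk k A A).flip b) (ΔA a)) =
        LinearMap.lTensor A (LinearMap.mulRight k b) (ΔA a) := by
      induction ΔA a using TensorProduct.induction_on with
      | zero => simp
      | add x y hx hy => simp_all [map_add]
      | tmul x y => simp
    have h2 : TensorProduct.map (LinearMap.mul' k A) (LinearMap.mul' k A)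
        (TensorProduct.map (TensorProduct.mk k A A a)
          (TensorProduct.mk k A A 1) (ΔA b)) =
        LinearMap.rTensor A (LinearMap.mulLeft k a) (ΔA b) := by
      induction ΔA b using TensorProduct.induction_on with
      | zero => simp
      | add x y hx hy => simp_all [map_add]
      | tmul x y => simp
    rw [h1, h2]
    abel
end

section
/- Let (A, m, Δ) be an infinitesimal bialgebra of weight λ, and define a ⊳ b := Σ_{(b)} b_(1) a b_(2) (the image of Δ(b) under the linear map sending x ⊗ y to x a y). Then for all a, b, c ∈ A, writing (Δ ⊗ id)Δ(c) = Σ_{(c)} c_(1) ⊗ c_(2) ⊗ c_(3), one has (a ⊳ b) ⊳ c − a ⊳ (b ⊳ c) = − Σ_{(c)} c_(1) b c_(2) a c_(3) − Σ_{(c)} c_(1) a c_(2) b c_(3) − λ Σ_{(c)} (c_(1) a b c_(2) + c_(1) b a c_(2)). -/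
open TensorProduct

/-- The linear map `A ⊗ A → A` sending `x ⊗ y` to `x * a * y`. -/
noncomputable def sandwich (k : Type*) {A : Type*} [CommRing k] [NonUnitalRing A]
    [Module k A] [SMulCommClass k A A] [IsScalarTower k A A] (a : A) :
    A ⊗[k] A →ₗ[k] A :=
  (LinearMap.mul' k A).comp (LinearMap.rTensor A (LinearMap.mulRight k a))

section aux
variable {k A : Type*} [CommRing k] [NonUnitalRing A] [Module k A]
    [SMulCommClass k A A] [IsScalarTower k A A]

@[simp] lemma sandwich_tmul (a x y : A) :
    sandwich k a (x ⊗ₜ[k] y) = x * a * y := by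
  simp [sandwich]

lemma sw_rTensor (a u : A) (t : A ⊗[k] A) :
    sandwich k a (LinearMap.rTensor A (LinearMap.mulLeft k u) t) = u * sandwich k a t := by
  induction t using TensorProduct.induction_on with
  | zero => simp
  | tmul x y => simp [mul_assoc]
  | add s t hs ht => simp [hs, ht, mul_add]

lemma sw_lTensor (a u : A) (t : A ⊗[k] A) :
    sandwich k a (LinearMap.lTensor A (LinearMap.mulRight k u) t) = sandwich k a t * u := by
  induction t using TensorProduct.induction_on with
  | zero => simp
  | tmul x y => simp [mul_assoc]
  | add s t hs ht => simp [hs, ht, add_mul]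

lemma sw_swap (a b : A) (u : (A ⊗[k] A) ⊗[k] A) :
    sandwich k a (LinearMap.rTensor A (sandwich k b) u) =
      sandwich k b (LinearMap.lTensor A (sandwich k a) (TensorProduct.assoc k A A A u)) := by
  induction u using TensorProduct.induction_on with
  | zero => simp
  | tmul t z =>
    induction t using TensorProduct.induction_on with
    | zero => simp
    | tmul x y => simp [mul_assoc]
    | add s t hs ht => simp only [add_tmul, map_add, hs, ht]
  | add s t hs ht => simp [hs, ht]
end aux

/-- In an infinitesimal bialgebra of weight `λ`, with `a ⊳ b := Σ b₁ a b₂`: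
`(a ⊳ b) ⊳ c − a ⊳ (b ⊳ c)
  = − Σ c₁ b c₂ a c₃ − Σ c₁ a c₂ b c₃ − λ Σ (c₁ a b c₂ + c₁ b a c₂)`. -/
theorem pre_lie_associator_formula
    {k A : Type*} [CommRing k] [NonUnitalRing A] [Module k A]
    [SMulCommClass k A A] [IsScalarTower k A A] (lam : k)
    (Δ : A →ₗ[k] A ⊗[k] A)
    (hcoassoc : ∀ a : A,
      (TensorProduct.assoc k A A A) (LinearMap.rTensor A Δ (Δ a)) =
        LinearMap.lTensor A Δ (Δ a))
    (hcompat : ∀ a b : A,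
      Δ (a * b) =
        LinearMap.rTensor A (LinearMap.mulLeft k a) (Δ b) +
        LinearMap.lTensor A (LinearMap.mulRight k b) (Δ a) +
        lam • (a ⊗ₜ[k] b)) :
    ∀ a b c : A,
      sandwich k (sandwich k a (Δ b)) (Δ c) - sandwich k a (Δ (sandwich k b (Δ c))) =
        -(sandwich k a (LinearMap.rTensor A (sandwich k b) (LinearMap.rTensor A Δ (Δ c)))) -
        sandwich k a (LinearMap.lTensor A (sandwich k b) (LinearMap.lTensor A Δ (Δ c))) -
        lam • (sandwich k (a * b) (Δ c) + sandwich k (b * a) (Δ c)) := by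
  intro a b c
  -- key expansion of a ⊳ (b ⊳ s) as a linear identity in s
  have key : ∀ s : A ⊗[k] A,
      sandwich k a (Δ (sandwich k b s)) =
        sandwich k b (LinearMap.lTensor A (sandwich k a) (LinearMap.lTensor A Δ s)) +
        sandwich k b (LinearMap.rTensor A (sandwich k a) (LinearMap.rTensor A Δ s)) +
        sandwich k (sandwich k a (Δ b)) s +
        lam • (sandwich k (a * b) s + sandwich k (b * a) s) := by
    intro s
    induction s using TensorProduct.induction_on with
    | zero => simp
    | tmul x y =>
      rw [sandwich_tmul, hcompat (x * b) y, hcompat x b]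
      simp only [map_add, map_smul, sw_rTensor, sw_lTensor, sandwich_tmul,
        LinearMap.lTensor_tmul, LinearMap.rTensor_tmul, LinearMap.mulRight_apply, smul_add]
      noncomm_ring
    | add s t hs ht => simp only [map_add, hs, ht, smul_add]; abel
  rw [key (Δ c)]
  have h1 : sandwich k a (LinearMap.rTensor A (sandwich k b) (LinearMap.rTensor A Δ (Δ c))) =
      sandwich k b (LinearMap.lTensor A (sandwich k a) (LinearMap.lTensor A Δ (Δ c))) := by
    rw [← hcoassoc, ← sw_swap]
  have h2 : sandwich k a (LinearMap.lTensor A (sandwich k b) (LinearMap.lTensor A Δ (Δ c))) =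
      sandwich k b (LinearMap.rTensor A (sandwich k a) (LinearMap.rTensor A Δ (Δ c))) := by
    rw [← hcoassoc, ← sw_swap]
  rw [h1, h2]
  abel
end
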